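/- Let $\omega$ be a positive Borel measure on $(a,b)$, $c \in (a,b)$, and $F(x) = \omega([c,x))$ for $x \in [c,b)$. Then for every $n \in \mathbb{N}$ and $x \in [c,b)$, $F(x)^{n+1} \geq (n+1) \int_{[c,x)} F(t)^n \, d\omega(t)$. -/

import Mathlib

open MeasureTheory Set
open scoped ENNReal

/-- For the distribution function `F x = ω [c,x)` one has
`F(x)^(n+1) ≥ (n+1) ∫_{[c,x)} F(t)^n dω(t)`. -/
theorem stmt1 (a b c : ℝ) (ω : Measure ℝ) (hc : c ∈ Set.Ioo a b)
    (hfin : ∀ x ∈ Set.Ico c b, ω (Set.Ico c x) ≠ ⊤) :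
    ∀ (n : ℕ), ∀ x ∈ Set.Ico c b,
      (n + 1 : ℝ) * ∫ t in Set.Ico c x, ((ω (Set.Ico c t)).toReal) ^ n ∂ω ≤
        ((ω (Set.Ico c x)).toReal) ^ (n + 1) := by
  intro n x hx
  obtain ⟨hcx, hxb⟩ := hx
  set F : ℝ → ℝ := fun t => (ω (Set.Ico c t)).toReal with hFdef
  set N : ℝ≥0∞ := ω (Set.Ico c x) with hNdef
  have hN : N ≠ ⊤ := hfin x ⟨hcx, hxb⟩
  set Fx : ℝ := N.toReal with hFxdef
  have hFx0 : 0 ≤ Fx := ENNReal.toReal_nonneg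
  have hGmono : Monotone (fun t => ω (Set.Ico c t)) := fun s t hst =>
    measure_mono (Set.Ico_subset_Ico_right hst)
  have hFmeas : Measurable F := ENNReal.measurable_toReal.comp hGmono.measurable
  set μ : Measure ℝ := ω.restrict (Set.Ico c x) with hμdef
  have hFle : ∀ t, t ≤ x → ω (Set.Ico c t) ≤ N := fun t ht =>
    measure_mono (Set.Ico_subset_Ico_right ht)
  -- Key tail-measure bound
  have hkey : ∀ t : ℝ, 0 ≤ t → μ {a | t < F a} ≤ ENNReal.ofReal (Fx - t) := by
    intro t ht
    have hSm : MeasurableSet {a : ℝ | t < F a} := measurableSet_lt measurable_const hFmeas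
    rw [hμdef, Measure.restrict_apply hSm]
    set S : Set ℝ := {a | t < F a} ∩ Set.Ico c x with hSdef
    have hofReal : ENNReal.ofReal (Fx - t) = N - ENNReal.ofReal t := by
      rw [ENNReal.ofReal_sub _ ht, hFxdef, ENNReal.ofReal_toReal hN]
    rw [hofReal]
    have hup : ∀ a ∈ S, Set.Ico a x ⊆ S := by
      rintro a ⟨hta, hca, hax⟩ a' ⟨haa', ha'x⟩
      have hFa : t < F a' := lt_of_lt_of_le hta
        (ENNReal.toReal_mono (ne_top_of_le_ne_top hN (hFle a' ha'x.le))
          (measure_mono (Set.Ico_subset_Ico_right haa')))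
      exact ⟨hFa, ⟨le_trans hca haa', ha'x⟩⟩
    have hstep : ∀ a ∈ S, ω (Set.Ico a x) ≤ N - ENNReal.ofReal t := by
      rintro a ⟨hta, hca, hax⟩
      have h1 : ENNReal.ofReal t < ω (Set.Ico c a) := by
        rw [ENNReal.ofReal_lt_iff_lt_toReal ht (ne_top_of_le_ne_top hN (hFle a hax.le))]
        exact hta
      have h2 : ω (Set.Ico c a) + ω (Set.Ico a x) = N := by
        rw [← measure_union (Set.Ico_disjoint_Ico_same) measurableSet_Ico,
          Set.Ico_union_Ico_eq_Ico hca hax.le]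
      refine ENNReal.le_sub_of_add_le_right ENNReal.ofReal_ne_top ?_
      calc ω (Set.Ico a x) + ENNReal.ofReal t ≤ ω (Set.Ico a x) + ω (Set.Ico c a) :=
            add_le_add le_rfl h1.le
        _ = N := by rw [add_comm, h2]
    rcases S.eq_empty_or_nonempty with hSe | hSne
    · simp [hSe]
    · have hbdd : BddBelow S := ⟨c, fun a' ha' => ha'.2.1⟩
      set s := sInf S with hsdef
      have hsc : ∀ a' ∈ S, s ≤ a' := fun a' ha' => csInf_le hbdd ha'
      by_cases hsS : s ∈ S
      · refine le_trans (measure_mono (fun a' ha' => ?_)) (hstep s hsS)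
        exact ⟨hsc a' ha', ha'.2.2⟩
      · have hsx : s < x := by
          obtain ⟨a', ha'⟩ := hSne
          exact lt_of_le_of_lt (hsc a' ha') ha'.2.2
        have hSub : Set.Ioo s x ⊆ S := by
          rintro a' ⟨hsa, hax⟩
          obtain ⟨a₀, ha₀S, ha₀a⟩ := exists_lt_of_csInf_lt hSne hsa
          exact hup a₀ ha₀S ⟨ha₀a.le, hax⟩
        have hSsub : S ⊆ Set.Ioo s x := fun a' ha' =>
          ⟨lt_of_le_of_ne (hsc a' ha') (fun h => hsS (h ▸ ha')), ha'.2.2⟩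
        set u : ℕ → ℝ := fun k => s + (x - s) / (k + 2) with hudef
        have hu_mem : ∀ k, u k ∈ Set.Ioo s x := by
          intro k
          have hk2 : (0:ℝ) < (k:ℝ) + 2 := by positivity
          constructor
          · have : 0 < (x - s) / ((k:ℝ) + 2) := div_pos (sub_pos.2 hsx) hk2
            simp only [hudef]; linarith
          · have : (x - s) / ((k:ℝ) + 2) < x - s :=
              div_lt_self (sub_pos.2 hsx) (by have := Nat.cast_nonneg (α:=ℝ) k; linarith)
            simp only [hudef]; linarith
        have hUnion : Set.Ioo s x = ⋃ k, Set.Ico (u k) x := by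
          ext a'
          constructor
          · rintro ⟨hsa, hax⟩
            obtain ⟨k, hk⟩ := exists_nat_gt ((x - s) / (a' - s))
            refine Set.mem_iUnion.2 ⟨k, ?_, hax⟩
            have has : 0 < a' - s := sub_pos.2 hsa
            have hxs : 0 < x - s := sub_pos.2 hsx
            have h1 : x - s < ((k:ℝ) + 2) * (a' - s) := by
              have := (div_lt_iff₀ has).1 hk
              nlinarith
            have hk2 : (0:ℝ) < (k:ℝ) + 2 := by positivity
            have : (x - s) / ((k:ℝ) + 2) < a' - s := (div_lt_iff₀ hk2).2 (by nlinarith)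
            simp only [hudef]; linarith
          · intro h
            obtain ⟨k, hk1, hk2⟩ := Set.mem_iUnion.1 h
            exact ⟨lt_of_lt_of_le (hu_mem k).1 hk1, hk2⟩
        have hmono : Monotone (fun k => Set.Ico (u k) x) := by
          intro k k' hkk'
          refine Set.Ico_subset_Ico ?_ le_rfl
          have hxs : 0 ≤ x - s := (sub_pos.2 hsx).le
          simp only [hudef]
          gcongr
        calc ω S ≤ ω (Set.Ioo s x) := measure_mono hSsub
          _ = ⨆ k, ω (Set.Ico (u k) x) := by
              rw [hUnion, hmono.directed_le.measure_iUnion]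
          _ ≤ N - ENNReal.ofReal t := iSup_le fun k => hstep (u k) (hSub (hu_mem k))
  -- the function is nonnegative and bounded
  obtain _ | m := n
  · -- n = 0
    simp only [pow_zero, pow_one]
    rw [MeasureTheory.setIntegral_const]
    simp only [smul_eq_mul, mul_one]
    rw [measureReal_def, ← hNdef, ← hFxdef]
    norm_num
  · -- n = m + 1
    set g : ℝ → ℝ := fun t => ((m:ℝ) + 1) * t ^ m with hgdef
    have f_nn : 0 ≤ᵐ[μ] F := Filter.Eventually.of_forall fun t => ENNReal.toReal_nonneg
    have f_mble : AEMeasurable F μ := hFmeas.aemeasurable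
    have g_intble : ∀ t > (0:ℝ), IntervalIntegrable g volume 0 t := fun t _ =>
      (intervalIntegral.intervalIntegrable_pow m).const_mul _
    have g_nn : ∀ᵐ t ∂(volume.restrict (Set.Ioi (0:ℝ))), 0 ≤ g t := by
      refine (ae_restrict_iff' measurableSet_Ioi).2 (Filter.Eventually.of_forall fun t ht => ?_)
      have : (0:ℝ) < t := ht
      positivity
    have lc := lintegral_comp_eq_lintegral_meas_lt_mul μ f_nn f_mble g_intble g_nn
    have hG : ∀ y : ℝ, (∫ t in (0:ℝ)..y, g t) = y ^ (m + 1) := by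
      intro y
      rw [hgdef]
      rw [intervalIntegral.integral_const_mul, integral_pow]
      have hm1 : ((m:ℝ) + 1) ≠ 0 := by positivity
      field_simp
      simp
    simp_rw [hG] at lc
    -- bound the lintegral
    have hcont : Continuous (fun t : ℝ => max (Fx - t) 0 * g t) :=
      ((continuous_const.sub continuous_id).max continuous_const).mul
        (continuous_const.mul (continuous_pow m))
    have hbound : (∫⁻ t, ENNReal.ofReal (F t ^ (m + 1)) ∂μ) ≤
        ENNReal.ofReal (Fx ^ (m + 2) / ((m:ℝ) + 2)) := by
      rw [lc]
      have step1 : (∫⁻ t in Set.Ioi (0:ℝ), μ {a | t < F a} * ENNReal.ofReal (g t)) ≤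
          ∫⁻ t in Set.Ioi (0:ℝ), ENNReal.ofReal (max (Fx - t) 0 * g t) := by
        refine setLIntegral_mono (hcont.measurable.ennreal_ofReal) fun t ht => ?_
        have ht0 : (0:ℝ) < t := ht
        have h1 : μ {a | t < F a} ≤ ENNReal.ofReal (max (Fx - t) 0) := by
          refine le_trans (hkey t ht0.le) (le_of_eq ?_)
          rcases le_total (Fx - t) 0 with h | h
          · rw [ENNReal.ofReal_of_nonpos h, max_eq_right h, ENNReal.ofReal_zero]
          · rw [max_eq_left h]
        calc μ {a | t < F a} * ENNReal.ofReal (g t)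
            ≤ ENNReal.ofReal (max (Fx - t) 0) * ENNReal.ofReal (g t) :=
              mul_le_mul_left h1 _
          _ = ENNReal.ofReal (max (Fx - t) 0 * g t) :=
              (ENNReal.ofReal_mul (le_max_right _ _)).symm
      refine le_trans step1 (le_of_eq ?_)
      rw [← Set.Ioc_union_Ioi_eq_Ioi hFx0,
        lintegral_union measurableSet_Ioi (Set.Ioc_disjoint_Ioi le_rfl)]
      have hzero : (∫⁻ t in Set.Ioi Fx, ENNReal.ofReal (max (Fx - t) 0 * g t)) = 0 := by
        rw [setLIntegral_congr_fun measurableSet_Ioi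
          (fun t ht => ?_), lintegral_zero]
        have ht : Fx < t := ht
        rw [max_eq_right (by linarith), zero_mul, ENNReal.ofReal_zero]
      rw [hzero, add_zero]
      have hint : IntegrableOn (fun t : ℝ => max (Fx - t) 0 * g t) (Set.Ioc 0 Fx) volume :=
        hcont.integrableOn_Ioc
      have hnn : 0 ≤ᵐ[volume.restrict (Set.Ioc (0:ℝ) Fx)] fun t => max (Fx - t) 0 * g t := by
        refine (ae_restrict_iff' measurableSet_Ioc).2 (Filter.Eventually.of_forall fun t ht => ?_)
        have ht0 : (0:ℝ) < t := ht.1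
        have : (0:ℝ) ≤ g t := by rw [hgdef]; positivity
        exact mul_nonneg (le_max_right _ _) this
      rw [← MeasureTheory.ofReal_integral_eq_lintegral_ofReal hint hnn]
      congr 1
      have heq1 : (∫ t in Set.Ioc (0:ℝ) Fx, max (Fx - t) 0 * g t) =
          ∫ t in Set.Ioc (0:ℝ) Fx, (Fx - t) * g t := by
        refine setIntegral_congr_fun measurableSet_Ioc fun t ht => ?_
        rw [max_eq_left (sub_nonneg.2 ht.2)]
      rw [heq1, ← intervalIntegral.integral_of_le hFx0]
      have heq2 : (∫ t in (0:ℝ)..Fx, (Fx - t) * g t) =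
          ∫ t in (0:ℝ)..Fx, (((m:ℝ) + 1) * Fx * t ^ m - ((m:ℝ) + 1) * t ^ (m + 1)) := by
        refine intervalIntegral.integral_congr fun t _ => ?_
        rw [hgdef]; ring
      rw [heq2, intervalIntegral.integral_sub
        ((intervalIntegral.intervalIntegrable_pow m).const_mul _)
        ((intervalIntegral.intervalIntegrable_pow (m+1)).const_mul _),
        intervalIntegral.integral_const_mul, intervalIntegral.integral_const_mul,
        integral_pow, integral_pow]
      have h1 : ((m:ℝ) + 1) ≠ 0 := by positivity
      have h2 : ((m:ℝ) + 2) ≠ 0 := by positivity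
      push_cast
      field_simp
      ring
    -- convert to Bochner integral
    have heq : (∫ t in Set.Ico c x, F t ^ (m + 1) ∂ω) =
        (∫⁻ t, ENNReal.ofReal (F t ^ (m + 1)) ∂μ).toReal := by
      rw [hμdef]
      exact integral_eq_lintegral_of_nonneg_ae
        (Filter.Eventually.of_forall fun t => pow_nonneg ENNReal.toReal_nonneg _)
        ((hFmeas.pow_const _).aestronglyMeasurable)
    have hfin2 : (∫ t in Set.Ico c x, F t ^ (m + 1) ∂ω) ≤ Fx ^ (m + 2) / ((m:ℝ) + 2) := by
      rw [heq]
      have := ENNReal.toReal_mono ENNReal.ofReal_ne_top hbound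
      rwa [ENNReal.toReal_ofReal (by positivity)] at this
    have h2 : (0:ℝ) < (m:ℝ) + 2 := by positivity
    calc ((m + 1 : ℕ) + 1 : ℝ) * ∫ t in Set.Ico c x, F t ^ (m + 1) ∂ω
        = ((m:ℝ) + 2) * ∫ t in Set.Ico c x, F t ^ (m + 1) ∂ω := by push_cast; ring
      _ ≤ ((m:ℝ) + 2) * (Fx ^ (m + 2) / ((m:ℝ) + 2)) := by
          exact mul_le_mul_of_nonneg_left hfin2 h2.le
      _ = Fx ^ (m + 2) := by field_simp
      _ = Fx ^ (m + 1 + 1) := by norm_num
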